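/- Let f(X) = Σ_{i=1}^e a_i X^{t_i} + Σ_{i=1}^d b_i X^{-u_i} be a rational function over F_{2^m}, where e, d > 0, the exponents t_e > ... > t_1 > 0 and u_d > ... > u_1 > 0 are all odd integers, and all coefficients a_i, b_i are nonzero. Then f is non-degenerate: there do not exist a rational function h over F_{2^m} and a constant c ∈ F_{2^m} such that f = h^2 - h + c. -/

import Mathlib

open scoped Multiplicative

local notation "ℤₘ₀" => WithZero (Multiplicative ℤ)


/-- Let `f(X) = Σ a_i X^(t_i) + Σ b_i X^(-u_i)` over `F_(2^m)`, with all
exponents odd and positive, strictly increasing, and all coefficients nonzero.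
Then `f` is non-degenerate: there are no rational function `h` and constant `c`
with `f = h^2 - h + c`. -/
theorem stmt9 (m : ℕ) (hm : 0 < m) (F : Type*) [Field F] [Fintype F]
    (hF : Fintype.card F = 2 ^ m)
    (e d : ℕ) (he : 0 < e) (hd : 0 < d)
    (t : Fin e → ℕ) (u : Fin d → ℕ)
    (ht : StrictMono t) (hu : StrictMono u)
    (htodd : ∀ i, Odd (t i)) (huodd : ∀ i, Odd (u i))
    (htpos : ∀ i, 0 < t i) (hupos : ∀ i, 0 < u i)
    (a : Fin e → F) (b : Fin d → F)
    (ha : ∀ i, a i ≠ 0) (hb : ∀ i, b i ≠ 0)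
    (f : RatFunc F)
    (hf : f = ∑ i : Fin e, RatFunc.C (a i) * RatFunc.X ^ (t i)
            + ∑ i : Fin d, RatFunc.C (b i) * (RatFunc.X ^ (u i))⁻¹) :
    ¬ ∃ (h : RatFunc F) (c : F), f = h ^ 2 - h + RatFunc.C c := by
  letI : DecidableEq (RatFunc F) := Classical.decEq _
  rintro ⟨h, c, hc⟩
  set v := FunctionField.inftyValuation F with hvdef
  have hvX : v RatFunc.X = ((Multiplicative.ofAdd (1 : ℤ) : Multiplicative ℤ) : ℤₘ₀) :=
    FunctionField.inftyValuation.X F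
  have hvC : ∀ k : F, k ≠ 0 → v (RatFunc.C k) = (1 : ℤₘ₀) := by
    intro k hk
    have := FunctionField.inftyValuation.C F hk
    exact this
  have hvCle : ∀ k : F, v (RatFunc.C k) ≤ 1 := by
    intro k
    by_cases hk : k = 0
    · simp [hk]
    · exact (hvC k hk).le
  have hvXpow : ∀ n : ℕ, v (RatFunc.X ^ n) =
      ((Multiplicative.ofAdd (n : ℤ) : Multiplicative ℤ) : ℤₘ₀) := by
    intro n
    rw [map_pow, hvX, ← WithZero.coe_pow, WithZero.coe_inj, ← ofAdd_nsmul]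
    norm_num
  have hvterm : ∀ i : Fin e, v (RatFunc.C (a i) * RatFunc.X ^ (t i)) =
      ((Multiplicative.ofAdd ((t i : ℤ)) : Multiplicative ℤ) : ℤₘ₀) := by
    intro i
    rw [map_mul, hvC _ (ha i), one_mul, hvXpow]
  have hvterm' : ∀ i : Fin d, v (RatFunc.C (b i) * (RatFunc.X ^ (u i))⁻¹) =
      ((Multiplicative.ofAdd (-(u i : ℤ)) : Multiplicative ℤ) : ℤₘ₀) := by
    intro i
    rw [map_mul, hvC _ (hb i), one_mul, Valuation.map_inv, hvXpow, ← WithZero.coe_inv,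
      WithZero.coe_inj]
    rfl
  set j : Fin e := ⟨e - 1, by omega⟩ with hj
  have hjt : ∀ i : Fin e, i ≠ j → t i < t j := by
    intro i hi
    apply ht
    have h1 : (i : ℕ) < e := i.isLt
    have h2 : (i : ℕ) ≠ e - 1 := fun hh => hi (Fin.ext hh)
    have h3 : (j : ℕ) = e - 1 := rfl
    exact Fin.lt_def.mpr (by omega)
  have hvP : v (∑ i : Fin e, RatFunc.C (a i) * RatFunc.X ^ (t i)) =
      ((Multiplicative.ofAdd ((t j : ℤ)) : Multiplicative ℤ) : ℤₘ₀) := by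
    rw [Valuation.map_sum_eq_of_lt v (Finset.mem_univ j)]
    · exact hvterm j
    · intro i hi
      rw [hvterm, hvterm, WithZero.coe_lt_coe, Multiplicative.ofAdd_lt]
      have hij : i ≠ j := by rintro rfl; simp at hi
      exact_mod_cast hjt i hij
  have hvQ : v (∑ i : Fin d, RatFunc.C (b i) * (RatFunc.X ^ (u i))⁻¹) ≤
      ((Multiplicative.ofAdd ((-1 : ℤ)) : Multiplicative ℤ) : ℤₘ₀) := by
    apply Valuation.map_sum_le
    intro i _
    rw [hvterm', WithZero.coe_le_coe, Multiplicative.ofAdd_le]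
    have := hupos i
    omega
  have hneg_lt_one : ((Multiplicative.ofAdd ((-1 : ℤ)) : Multiplicative ℤ) : ℤₘ₀) < 1 := by
    rw [show (1 : ℤₘ₀) = ((Multiplicative.ofAdd ((0 : ℤ)) : Multiplicative ℤ) : ℤₘ₀) by simp,
      WithZero.coe_lt_coe, Multiplicative.ofAdd_lt]
    norm_num
  have hone_lt_t : (1 : ℤₘ₀) < ((Multiplicative.ofAdd ((t j : ℤ)) : Multiplicative ℤ) : ℤₘ₀) := by
    rw [show (1 : ℤₘ₀) = ((Multiplicative.ofAdd ((0 : ℤ)) : Multiplicative ℤ) : ℤₘ₀) by simp,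
      WithZero.coe_lt_coe, Multiplicative.ofAdd_lt]
    exact_mod_cast htpos j
  have hvf : v f = ((Multiplicative.ofAdd ((t j : ℤ)) : Multiplicative ℤ) : ℤₘ₀) := by
    rw [hf, Valuation.map_add_eq_of_lt_left, hvP]
    rw [hvP]
    exact lt_of_le_of_lt hvQ (lt_trans hneg_lt_one hone_lt_t)
  by_cases hvh : v h ≤ 1
  · have hle : v f ≤ 1 := by
      rw [hc]
      refine le_trans (Valuation.map_add v _ _) (max_le ?_ (hvCle c))
      refine le_trans (Valuation.map_sub v _ _) (max_le ?_ hvh)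
      rw [map_pow]
      calc (v h) ^ 2 ≤ 1 ^ 2 := pow_le_pow_left' hvh 2
        _ = 1 := one_pow 2
    rw [hvf] at hle
    exact absurd (lt_of_lt_of_le hone_lt_t hle) (lt_irrefl _)
  · push_neg at hvh
    have hh0 : h ≠ 0 := by
      rintro rfl
      simp at hvh
    have hvhval : v h = ((Multiplicative.ofAdd (h.intDegree) : Multiplicative ℤ) : ℤₘ₀) :=
      FunctionField.inftyValuation_of_nonzero F hh0
    have hklt : v h < v (h ^ 2) := by
      rw [map_pow, sq]
      calc v h = v h * 1 := (mul_one _).symm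
        _ < v h * v h := by
          apply mul_lt_mul_of_pos_left hvh (zero_lt_iff.mpr ?_)
          rw [hvhval]; exact WithZero.coe_ne_zero
    have hv2 : v (h ^ 2 - h) = v (h ^ 2) := Valuation.map_sub_eq_of_lt_left v hklt
    have hvrhs : v (h ^ 2 - h + RatFunc.C c) = v (h ^ 2) := by
      rw [Valuation.map_add_eq_of_lt_left, hv2]
      rw [hv2, map_pow]
      calc v (RatFunc.C c) ≤ 1 := hvCle c
        _ < v h := hvh
        _ ≤ (v h) ^ 2 := by
          rw [sq]
          calc v h = 1 * v h := (one_mul _).symm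
            _ ≤ v h * v h := mul_le_mul_left hvh.le _
    have heq : ((Multiplicative.ofAdd ((t j : ℤ)) : Multiplicative ℤ) : ℤₘ₀)
        = ((Multiplicative.ofAdd (2 * h.intDegree) : Multiplicative ℤ) : ℤₘ₀) := by
      rw [← hvf, hc, hvrhs, map_pow, hvhval, ← WithZero.coe_pow, WithZero.coe_inj,
        ← ofAdd_nsmul]
      norm_num [two_mul]
    have heq2 : (t j : ℤ) = 2 * h.intDegree :=
      Multiplicative.ofAdd.injective (WithZero.coe_inj.mp heq)
    obtain ⟨k', hk'⟩ := htodd j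
    omega
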